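/- arXiv:1110.1023 — 2 statements merged into one kernel-verified Lean document; each statement's English description precedes it below -/
import Mathlib

section
/- Let R be a (possibly noncommutative) associative unital ring and let ε ∈ R satisfy ε^n = 0 and n·ε = 0 for some positive integer n. Then (1 + ε)^(n^n) = 1. -/
private lemma expand_step {R : Type*} [Ring R] (ε c t : R) (ht : ε*t = t*ε) :
    (1 + t*ε + ε^2*c)*(1+ε) = 1 + (t+1)*ε + ε^2*(c + t + c*ε) := by
  have h : t*ε*ε = ε^2*t := by rw [← ht, mul_assoc, ← ht, ← mul_assoc, ← sq]
  rw [mul_add, mul_one, add_mul, add_mul, h]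
  noncomm_ring

private lemma binom_expand {R : Type*} [Ring R] (ε : R) :
    ∀ m : ℕ, ∃ c : R, Commute ε c ∧ (1 + ε) ^ m = 1 + (m : R) * ε + ε ^ 2 * c := by
  intro m
  induction m with
  | zero => exact ⟨0, Commute.zero_right ε, by simp⟩
  | succ m ih =>
    obtain ⟨c, hc, hm⟩ := ih
    refine ⟨c + (m : R) + c * ε, (hc.add_right (Nat.cast_commute m ε).symm).add_right
      (hc.mul_right (Commute.refl ε)), ?_⟩
    rw [pow_succ, hm]
    push_cast
    exact expand_step ε c (m : R) (Nat.cast_commute m ε).symm.eq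

private lemma aux_pow {R : Type*} [Ring R] (n : ℕ) :
    ∀ k : ℕ, ∀ ε : R, ε ^ k = 0 → n • ε = 0 → (1 + ε) ^ (n ^ k) = 1 := by
  intro k
  induction k with
  | zero =>
    intro ε h0 _
    have h1 : (1:R) = 0 := by simpa using h0
    have := subsingleton_of_zero_eq_one h1.symm
    exact Subsingleton.elim _ _
  | succ k ih =>
    intro ε hk h2
    rcases Nat.eq_zero_or_pos k with rfl | hkpos
    · rw [pow_one] at hk
      simp [hk]
    · obtain ⟨c, hc, hpow⟩ := binom_expand ε n
      have hδ : (1+ε)^n = 1 + ε^2*c := by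
        rw [hpow, ← nsmul_eq_mul, h2, add_zero]
      set δ := ε^2*c with hδdef
      have hδk : δ^k = 0 := by
        have hcomm : Commute (ε^2) c := hc.pow_left 2
        rw [hδdef, hcomm.mul_pow, ← pow_mul,
          show 2*k = (k+1)+(k-1) by omega, pow_add, hk, zero_mul, zero_mul]
      have hδs : n • δ = 0 := by
        have h3 : n • ε^2 = 0 := by rw [sq, ← smul_mul_assoc, h2, zero_mul]
        rw [hδdef, ← smul_mul_assoc, h3, zero_mul]
      calc (1+ε)^(n^(k+1)) = ((1+ε)^n)^(n^k) := by rw [← pow_mul, ← pow_succ']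
        _ = (1+δ)^(n^k) := by rw [hδ]
        _ = 1 := ih δ hδk hδs

theorem one_add_nilpotent_pow_eq_one (R : Type*) [Ring R] (n : ℕ) (hn : 0 < n)
    (ε : R) (h1 : ε ^ n = 0) (h2 : n • ε = 0) :
    (1 + ε) ^ (n ^ n) = 1 := by
  exact aux_pow n n ε h1 h2
end

section
/- For every integer n ≥ 1 and every integer i with 0 < i < n, the binomial coefficient C(n^n, i) is divisible by n. -/
theorem n_dvd_choose_pow (n i : ℕ) (hn : 1 ≤ n) (hi : 0 < i) (hin : i < n) :
    n ∣ Nat.choose (n ^ n) i := by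
  have hn2 : 2 ≤ n := lt_of_le_of_lt hi hin
  have hpow : 0 < n ^ n := Nat.pow_pos hn
  have hile : i ≤ n ^ n := le_trans hin.le (Nat.le_self_pow (by omega) n)
  have hC : 0 < Nat.choose (n ^ n) i := Nat.choose_pos hile
  have hC' : 0 < Nat.choose (n ^ n - 1) (i - 1) := Nat.choose_pos (by omega)
  have key : n ^ n * Nat.choose (n ^ n - 1) (i - 1) = Nat.choose (n ^ n) i * i := by
    have h := Nat.add_one_mul_choose_eq (n ^ n - 1) (i - 1)
    have h1 : n ^ n - 1 + 1 = n ^ n := by omega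
    have h2 : i - 1 + 1 = i := by omega
    simpa [Nat.succ_eq_add_one, h1, h2] using h
  rw [← Nat.factorization_le_iff_dvd (by omega) hC.ne']
  intro p
  by_cases hp : p.Prime
  · set k := n.factorization p with hk
    by_cases hk0 : k = 0
    · simp [hk0, ← hk]
    -- valuation equation from key
    have hfac : n * k + (Nat.choose (n ^ n - 1) (i - 1)).factorization p
        = (Nat.choose (n ^ n) i).factorization p + i.factorization p := by
      have := congrArg (fun m => m.factorization p) key
      simpa [Nat.factorization_mul hpow.ne' hC'.ne',
        Nat.factorization_mul hC.ne' hi.ne', Nat.factorization_pow, ← hk] using this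
    -- bound v_p(i) ≤ (n-1) * k
    have hv : i.factorization p ≤ (n - 1) * k := by
      have hvi : p ^ i.factorization p ≤ i :=
        Nat.le_of_dvd hi (Nat.ordProj_dvd i p)
      have h2n : n ≤ 2 ^ (n - 1) := by
        calc n = n - 1 + 1 := by omega
        _ ≤ 2 ^ (n - 1) := Nat.succ_le_of_lt (Nat.lt_two_pow_self (n := n - 1))
      have : p ^ i.factorization p < p ^ ((n - 1) * k) := by
        calc p ^ i.factorization p ≤ i := hvi
        _ < n := hin
        _ ≤ 2 ^ (n - 1) := h2n
        _ ≤ p ^ (n - 1) := Nat.pow_le_pow_left hp.two_le _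
        _ ≤ p ^ ((n - 1) * k) := Nat.pow_le_pow_right hp.pos (by nlinarith [Nat.one_le_iff_ne_zero.mpr hk0])
      exact le_of_lt (Nat.pow_lt_pow_iff_right hp.one_lt |>.mp this)
    have hnk : n * k = (n - 1) * k + k := by
      rw [← Nat.add_one_mul]; congr 1; omega
    omega
  · simp [Nat.factorization_eq_zero_of_not_prime _ hp]
end
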